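/- Let k be a field and k((t)) the Laurent series field (HahnSeries ℤ k). Let a, b ∈ k((t)) with b.coeff q = 0 for all q ≤ 0 (i.e. b lies in the maximal ideal), and let n ∈ ℕ be such that (a·bⁿ).coeff q = 0 for all q ≤ 0 (i.e. a·bⁿ lies in the maximal ideal). Then for every β ∈ k: res( a · (1 − b·C β)⁻¹ ) = Σ_{i=0}^{n−1} res(a·bⁱ) · βⁱ, where res(z) = z.coeff 0 and C : k → k((t)) is the constant embedding. -/

import Mathlib

lemma stmt_10_aux {k : Type*} [Field k] (x y : HahnSeries ℤ k)
    (hx : ∀ q : ℤ, q ≤ 0 → x.coeff q = 0) (hy : ∀ q : ℤ, q < 0 → y.coeff q = 0) :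
    (x * y).coeff 0 = 0 := by
  rw [HahnSeries.coeff_mul]
  apply Finset.sum_eq_zero
  rintro ⟨i, j⟩ hij
  rw [Finset.mem_addAntidiagonal] at hij
  obtain ⟨hi, hj, hsum⟩ := hij
  by_cases h : i ≤ 0
  · rw [hx i h, zero_mul]
  · rw [hy j (by omega), mul_zero]

/-- in k((t)) = HahnSeries ℤ k, if b and a·bⁿ lie in the maximal ideal, then
    for every β ∈ k: res(a/(1 − b·C β)) = Σ_{i=0}^{n−1} res(a·bⁱ)·βⁱ. -/
theorem stmt_10 {k : Type*} [Field k] (a b : HahnSeries ℤ k)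
    (hb : ∀ q : ℤ, q ≤ 0 → b.coeff q = 0) (n : ℕ)
    (hab : ∀ q : ℤ, q ≤ 0 → (a * b ^ n).coeff q = 0) (β : k) :
    (a * (1 - b * HahnSeries.C β)⁻¹).coeff 0 =
      ∑ i ∈ Finset.range n, (a * b ^ i).coeff 0 * β ^ i := by
  set x : HahnSeries ℤ k := b * HahnSeries.C β with hxdef
  set u : HahnSeries ℤ k := 1 - x with hudef
  have hxcoeff : ∀ q : ℤ, q ≤ 0 → x.coeff q = 0 := by
    intro q hq
    rw [hxdef, HahnSeries.C_apply, HahnSeries.coeff_mul_single_zero, hb q hq, zero_mul]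
  have hu0 : u.coeff 0 = 1 := by
    rw [hudef, HahnSeries.coeff_sub, HahnSeries.coeff_one, if_pos rfl, hxcoeff 0 le_rfl, sub_zero]
  have huneg : ∀ q : ℤ, q < 0 → u.coeff q = 0 := by
    intro q hq
    rw [hudef, HahnSeries.coeff_sub, HahnSeries.coeff_one, if_neg (by omega),
      hxcoeff q (le_of_lt hq), sub_zero]
  have hune : u ≠ 0 := fun h => by simp [h] at hu0
  have huorder : u.order = 0 := by
    have h1 : u.order ≤ 0 := HahnSeries.order_le_of_coeff_ne_zero (by rw [hu0]; exact one_ne_zero)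
    have h2 : ¬ u.order < 0 := fun h => hune (HahnSeries.coeff_order_eq_zero.mp (huneg _ h))
    omega
  have hinvne : u⁻¹ ≠ 0 := inv_ne_zero hune
  have hinvorder : u⁻¹.order = 0 := by
    have h := HahnSeries.order_mul hune hinvne
    rw [mul_inv_cancel₀ hune, HahnSeries.order_one, huorder, zero_add] at h
    exact h.symm
  have hinvneg : ∀ q : ℤ, q < 0 → u⁻¹.coeff q = 0 := fun q hq =>
    HahnSeries.coeff_eq_zero_of_lt_order (by omega)
  -- geometric series identity
  have hgeom : a * u⁻¹ = (∑ i ∈ Finset.range n, a * x ^ i) + (a * x ^ n) * u⁻¹ := by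
    have hS : u * (∑ i ∈ Finset.range n, x ^ i) = 1 - x ^ n := by
      have h := geom_sum_mul x n
      rw [hudef]
      linear_combination -h
    have key : u * ((∑ i ∈ Finset.range n, x ^ i) + x ^ n * u⁻¹) = 1 := by
      rw [mul_add, hS, ← mul_assoc, mul_comm u (x ^ n), mul_assoc,
        mul_inv_cancel₀ hune, mul_one]
      ring
    have h2 : u⁻¹ = (∑ i ∈ Finset.range n, x ^ i) + x ^ n * u⁻¹ := by
      apply mul_left_cancel₀ hune
      rw [mul_inv_cancel₀ hune, key]
    calc a * u⁻¹ = a * ((∑ i ∈ Finset.range n, x ^ i) + x ^ n * u⁻¹) := by rw [← h2]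
      _ = (∑ i ∈ Finset.range n, a * x ^ i) + (a * x ^ n) * u⁻¹ := by
          rw [mul_add, Finset.mul_sum, ← mul_assoc]
  rw [hgeom, HahnSeries.coeff_add]
  -- the remainder term vanishes
  have hrem : ((a * x ^ n) * u⁻¹).coeff 0 = 0 := by
    have hax : a * x ^ n = (a * b ^ n) * HahnSeries.C (β ^ n) := by
      rw [hxdef, mul_pow, ← map_pow]
      ring
    rw [hax, mul_assoc]
    apply stmt_10_aux
    · exact hab
    · intro q hq
      rw [HahnSeries.C_apply, HahnSeries.coeff_single_zero_mul, hinvneg q hq, mul_zero]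
  rw [hrem, add_zero]
  rw [show (∑ i ∈ Finset.range n, a * x ^ i).coeff 0
      = ∑ i ∈ Finset.range n, (a * x ^ i).coeff 0 from
    map_sum (HahnSeries.coeff.addMonoidHom (0 : ℤ)) _ _]
  apply Finset.sum_congr rfl
  intro i _
  rw [hxdef, mul_pow, ← map_pow, ← mul_assoc, HahnSeries.C_apply, HahnSeries.coeff_mul_single_zero]
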